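/- For odd p = 2n+1 ≥ 3, there exist p×p matrices A, B, C with entries in {0,1,2}, each having all row sums and column sums equal to p, such that {Aᵢⱼ, Bᵢⱼ, Cᵢⱼ} = {0,1,2} for every cell (i,j). Specifically: A has first row (2,…,2,1,0,…,0) (n twos, one 1, n zeros) and each subsequent row is the cyclic right shift of the previous; B is obtained from A by cyclically shifting columns by n+1 (Bᵢⱼ = Aᵢ,ⱼ₊ₙ₊₁ indices mod p); C has first row (1,…,1,0,1,…,1,2) with 0 in position n+1 and 2 in position 2n+1, each subsequent row the cyclic right shift of the previous. -/
import Mathlib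

/-- value at position `k` of the circulant pattern for `A`. -/
def fA (n k : ℕ) : ℕ := if k < n then 2 else if k = n then 1 else 0

/-- value at position `k` of the circulant pattern for `B`. -/
def fB (n k : ℕ) : ℕ := if k < n then 0 else if k = 2 * n then 1 else 2

/-- value at position `k` of the circulant pattern for `C`. -/
def fC (n k : ℕ) : ℕ := if k = n then 0 else if k = 2 * n then 2 else 1

lemma cell (n k : ℕ) (hn : 1 ≤ n) :
    ({fA n k, fB n k, fC n k} : Finset ℕ) = ({0, 1, 2} : Finset ℕ) := by
  unfold fA fB fC
  split_ifs <;> first | decide | omega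

lemma rowsum (p : ℕ) (hp : 0 < p) (F : ℕ → ℕ) (i : Fin p) :
    ∑ j : Fin p, F ((i.1 + j.1) % p) = ∑ k ∈ Finset.range p, F k := by
  haveI : NeZero p := ⟨hp.ne'⟩
  have h1 : ∑ j : Fin p, F ((i.1 + j.1) % p) = ∑ j : Fin p, F ((i + j).val) := by
    apply Finset.sum_congr rfl
    intro j _
    rw [Fin.add_def]
  rw [h1]
  have h2 : ∑ j : Fin p, F ((i + j).val) = ∑ j : Fin p, F j.val :=
    Fintype.sum_equiv (Equiv.addLeft i) (fun j => F ((i + j).val))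
      (fun j => F j.val) (fun _ => rfl)
  rw [h2, Fin.sum_univ_eq_sum_range]

lemma sumA (n : ℕ) : ∑ k ∈ Finset.range (2 * n + 1), fA n k = 2 * n + 1 := by
  rw [show 2 * n + 1 = n + (n + 1) by ring, Finset.sum_range_add]
  have h1 : ∑ k ∈ Finset.range n, fA n k = 2 * n := by
    have hv : ∀ k ∈ Finset.range n, fA n k = 2 := by
      intro k hk
      simp only [Finset.mem_range] at hk
      unfold fA; rw [if_pos hk]
    rw [Finset.sum_congr rfl hv, Finset.sum_const, Finset.card_range, smul_eq_mul]
    omega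
  have h2 : ∑ k ∈ Finset.range (n + 1), fA n (n + k) = 1 := by
    rw [Finset.sum_range_succ']
    have hv : ∀ k ∈ Finset.range n, fA n (n + (k + 1)) = 0 := by
      intro k hk
      unfold fA; rw [if_neg (by omega), if_neg (by omega)]
    have h0 : fA n (n + 0) = 1 := by unfold fA; rw [if_neg (by omega), if_pos (by omega)]
    rw [Finset.sum_congr rfl hv, h0, Finset.sum_const, Finset.card_range, smul_eq_mul]; omega
  omega

lemma sumB (n : ℕ) : ∑ k ∈ Finset.range (2 * n + 1), fB n k = 2 * n + 1 := by
  rw [show 2 * n + 1 = n + (n + 1) by ring, Finset.sum_range_add]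
  have h1 : ∑ k ∈ Finset.range n, fB n k = 0 := by
    apply Finset.sum_eq_zero
    intro k hk
    simp only [Finset.mem_range] at hk
    unfold fB; rw [if_pos hk]
  have h2 : ∑ k ∈ Finset.range (n + 1), fB n (n + k) = 2 * n + 1 := by
    rw [Finset.sum_range_succ]
    have hv : ∀ k ∈ Finset.range n, fB n (n + k) = 2 := by
      intro k hk
      simp only [Finset.mem_range] at hk
      unfold fB; rw [if_neg (by omega), if_neg (by omega)]
    have hl : fB n (n + n) = 1 := by
      unfold fB; rw [if_neg (by omega), if_pos (by omega)]
    rw [Finset.sum_congr rfl hv, hl, Finset.sum_const, Finset.card_range, smul_eq_mul]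
    omega
  omega

lemma sumC (n : ℕ) (hn : 1 ≤ n) :
    ∑ k ∈ Finset.range (2 * n + 1), fC n k = 2 * n + 1 := by
  obtain ⟨m, rfl⟩ : ∃ m, n = m + 1 := ⟨n - 1, by omega⟩
  rw [show 2 * (m + 1) + 1 = (m + 1) + ((m + 1) + 1) by ring, Finset.sum_range_add]
  have h1 : ∑ k ∈ Finset.range (m + 1), fC (m + 1) k = m + 1 := by
    have hv : ∀ k ∈ Finset.range (m + 1), fC (m + 1) k = 1 := by
      intro k hk
      simp only [Finset.mem_range] at hk
      unfold fC; rw [if_neg (by omega), if_neg (by omega)]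
    rw [Finset.sum_congr rfl hv, Finset.sum_const, Finset.card_range, smul_eq_mul]
    omega
  have h2 : ∑ k ∈ Finset.range ((m + 1) + 1), fC (m + 1) ((m + 1) + k) = m + 2 := by
    rw [Finset.sum_range_succ, Finset.sum_range_succ']
    have hv : ∀ k ∈ Finset.range m, fC (m + 1) ((m + 1) + (k + 1)) = 1 := by
      intro k hk
      simp only [Finset.mem_range] at hk
      unfold fC; rw [if_neg (by omega), if_neg (by omega)]
    have h0 : fC (m + 1) ((m + 1) + 0) = 0 := by
      unfold fC; rw [if_pos (by omega)]
    have hl : fC (m + 1) ((m + 1) + (m + 1)) = 2 := by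
      unfold fC; rw [if_neg (by omega), if_pos (by omega)]
    rw [Finset.sum_congr rfl hv, h0, hl, Finset.sum_const, Finset.card_range, smul_eq_mul]
    omega
  omega

/-- For odd `p = 2n+1 ≥ 3` there exist `p × p` matrices `A, B, C` with entries in
`{0,1,2}`, all row and column sums equal to `p`, and `{Aᵢⱼ, Bᵢⱼ, Cᵢⱼ} = {0,1,2}`
at every cell. -/
theorem stmt15 (n : ℕ) (hn : 1 ≤ n) :
    ∃ A B C : Fin (2 * n + 1) → Fin (2 * n + 1) → ℕ,
      (∀ i j, ({A i j, B i j, C i j} : Finset ℕ) = ({0, 1, 2} : Finset ℕ)) ∧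
      (∀ i, ∑ j, A i j = 2 * n + 1) ∧ (∀ j, ∑ i, A i j = 2 * n + 1) ∧
      (∀ i, ∑ j, B i j = 2 * n + 1) ∧ (∀ j, ∑ i, B i j = 2 * n + 1) ∧
      (∀ i, ∑ j, C i j = 2 * n + 1) ∧ (∀ j, ∑ i, C i j = 2 * n + 1) := by
  have hp : 0 < 2 * n + 1 := by omega
  refine ⟨fun i j => fA n ((i.1 + j.1) % (2 * n + 1)),
          fun i j => fB n ((i.1 + j.1) % (2 * n + 1)),
          fun i j => fC n ((i.1 + j.1) % (2 * n + 1)), ?_, ?_, ?_, ?_, ?_, ?_, ?_⟩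
  · intro i j; exact cell n _ hn
  · intro i; rw [rowsum _ hp (fA n) i, sumA]
  · intro j
    have h : ∀ i : Fin (2 * n + 1), fA n ((i.1 + j.1) % (2 * n + 1))
        = fA n ((j.1 + i.1) % (2 * n + 1)) := fun i => by rw [Nat.add_comm]
    rw [Finset.sum_congr rfl (fun i _ => h i), rowsum _ hp (fA n) j, sumA]
  · intro i; rw [rowsum _ hp (fB n) i, sumB]
  · intro j
    have h : ∀ i : Fin (2 * n + 1), fB n ((i.1 + j.1) % (2 * n + 1))
        = fB n ((j.1 + i.1) % (2 * n + 1)) := fun i => by rw [Nat.add_comm]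
    rw [Finset.sum_congr rfl (fun i _ => h i), rowsum _ hp (fB n) j, sumB]
  · intro i; rw [rowsum _ hp (fC n) i, sumC n hn]
  · intro j
    have h : ∀ i : Fin (2 * n + 1), fC n ((i.1 + j.1) % (2 * n + 1))
        = fC n ((j.1 + i.1) % (2 * n + 1)) := fun i => by rw [Nat.add_comm]
    rw [Finset.sum_congr rfl (fun i _ => h i), rowsum _ hp (fC n) j, sumC n hn]
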